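/- Let L : ℝ → ℝ → ℝ → ℝ be a continuously differentiable Lagrangian in the arguments (x, v, t), let F : ℝ → ℝ be twice differentiable, and let x : ℝ → ℝ be a twice differentiable curve along which L is an invariant of motion, i.e., the function t ↦ L(x(t), x'(t), t) is constant. If x satisfies the Euler–Lagrange equation of L, then x satisfies the Euler–Lagrange equation of the Lagrangian F∘L, i.e., of (x, v, t) ↦ F(L(x, v, t)). Conversely, if in addition F'(L(x(t), x'(t), t)) ≠ 0 for all t and x satisfies the Euler–Lagrange equation of F∘L, then x satisfies the Euler–Lagrange equation of L. -/

import Mathlib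

/-- Partial derivative of the Lagrangian `L x v t` in the velocity argument. -/
noncomputable def pv (L : ℝ → ℝ → ℝ → ℝ) (x v t : ℝ) : ℝ := deriv (fun w => L x w t) v

/-- Partial derivative of the Lagrangian `L x v t` in the position argument. -/
noncomputable def px (L : ℝ → ℝ → ℝ → ℝ) (x v t : ℝ) : ℝ := deriv (fun y => L y v t) x

/-- A curve `x` satisfies the Euler–Lagrange equation of `L`:
`(d/dt)[(∂L/∂v)(x t, x' t, t)] = (∂L/∂x)(x t, x' t, t)` for all `t`. -/
def SatisfiesEL (L : ℝ → ℝ → ℝ → ℝ) (x : ℝ → ℝ) : Prop :=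
  ∀ t : ℝ, deriv (fun s => pv L (x s) (deriv x s) s) t = px L (x t) (deriv x t) t

/-- Partial derivative of `f (x, t)` in the first argument. -/
noncomputable def pd1 (f : ℝ × ℝ → ℝ) (x t : ℝ) : ℝ := deriv (fun y => f (y, t)) x

/-- Partial derivative of `f (x, t)` in the second argument. -/
noncomputable def pd2 (f : ℝ × ℝ → ℝ) (x t : ℝ) : ℝ := deriv (fun s => f (x, s)) t

theorem composed_lagrangian_of_invariant
    (L : ℝ → ℝ → ℝ → ℝ)
    (hL : ContDiff ℝ 1 (fun p : ℝ × ℝ × ℝ => L p.1 p.2.1 p.2.2))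
    (F : ℝ → ℝ) (hF : Differentiable ℝ F) (hF' : Differentiable ℝ (deriv F))
    (x : ℝ → ℝ) (hx : Differentiable ℝ x) (hx' : Differentiable ℝ (deriv x))
    (hinv : ∀ s t : ℝ, L (x s) (deriv x s) s = L (x t) (deriv x t) t) :
    (SatisfiesEL L x → SatisfiesEL (fun y v t => F (L y v t)) x) ∧
    ((∀ t : ℝ, deriv F (L (x t) (deriv x t) t) ≠ 0) →
      SatisfiesEL (fun y v t => F (L y v t)) x → SatisfiesEL L x) := by
  have hLd : Differentiable ℝ (fun p : ℝ × ℝ × ℝ => L p.1 p.2.1 p.2.2) :=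
    hL.differentiable one_ne_zero
  have hv : ∀ X V T : ℝ, DifferentiableAt ℝ (fun w => L X w T) V := by
    intro X V T
    exact (hLd.comp ((differentiable_const X).prodMk
      (differentiable_id.prodMk (differentiable_const T)))).differentiableAt
  have hxX : ∀ X V T : ℝ, DifferentiableAt ℝ (fun y => L y V T) X := by
    intro X V T
    exact (hLd.comp (differentiable_id.prodMk
      ((differentiable_const V).prodMk (differentiable_const T)))).differentiableAt
  have pvF : ∀ X V T : ℝ, pv (fun y v t => F (L y v t)) X V T
      = deriv F (L X V T) * pv L X V T := by
    intro X V T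
    exact deriv_comp V (hF _) (hv X V T)
  have pxF : ∀ X V T : ℝ, px (fun y v t => F (L y v t)) X V T
      = deriv F (L X V T) * px L X V T := by
    intro X V T
    exact deriv_comp X (hF _) (hxX X V T)
  set c : ℝ := L (x 0) (deriv x 0) 0 with hc0
  have hc : ∀ t : ℝ, L (x t) (deriv x t) t = c := fun t => hinv t 0
  have hfun : (fun s => pv (fun y v t => F (L y v t)) (x s) (deriv x s) s)
      = fun s => deriv F c * pv L (x s) (deriv x s) s := by
    funext s
    rw [pvF, hc]
  have hder : ∀ t : ℝ, deriv (fun s => pv (fun y v t => F (L y v t)) (x s) (deriv x s) s) t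
      = deriv F c * deriv (fun s => pv L (x s) (deriv x s) s) t := by
    intro t
    rw [hfun, deriv_const_mul_field]
  constructor
  · intro hEL t
    rw [hder t, pxF, hc, hEL t]
  · intro hne hEL t
    have hc' : deriv F c ≠ 0 := by
      have := hne t
      rwa [hc t] at this
    have h := hEL t
    rw [hder t, pxF, hc] at h
    exact mul_left_cancel₀ hc' h
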